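/- If SG*(a) ≠ 0, then SG*(a) = SG(2d·a), where SG*(a) = (3 - SG(a)) mod 3. -/
import Mathlib


/-- mex of the two-element set {a, b}: the least natural number not in {a, b}. -/
def mex2 (a b : ℕ) : ℕ :=
  if 0 ≠ a ∧ 0 ≠ b then 0 else if 1 ≠ a ∧ 1 ≠ b then 1 else if 2 ≠ a ∧ 2 ≠ b then 2 else 3

/-- The Sprague–Grundy sequence of the game G_{1,2d}: SG d 1 = 0 and
    SG d n = mex {SG d (n-1), SG d ⌈n/(2d)⌉} for n ≥ 2. -/
def SG (d : ℕ) : ℕ → ℕ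
  | 0 => 0
  | 1 => 0
  | n + 2 => mex2 (SG d (n + 1)) (SG d ((n + 2 + (2 * d - 1)) / (2 * d)))
decreasing_by
  · omega
  · rcases Nat.eq_zero_or_pos d with h | h
    · simp [h]
    · have h2 : 0 < 2 * d := by omega
      rw [Nat.div_lt_iff_lt_mul h2]
      simp only [Nat.succ_eq_add_one]
      have h6 : (n + 1 + 1) * 2 ≤ (n + 1 + 1) * (2 * d) := Nat.mul_le_mul_left _ (by omega)
      have h8 : 2 * (2 * d) ≤ (n + 1 + 1) * (2 * d) := Nat.mul_le_mul_right _ (by omega)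
      omega

/-- SG*(n) = (3 - SG(n)) mod 3. -/
def SGstar (d n : ℕ) : ℕ := (3 - SG d n) % 3
lemma mex2' (a b : ℕ) : mex2 a b ≤ 2 := by unfold mex2; split_ifs <;> omega

lemma SG_le (d n : ℕ) : SG d n ≤ 2 := by
  match n with
  | 0 => simp [SG]
  | 1 => simp [SG]
  | n+2 => rw [SG]; exact mex2' _ _

lemma SG_step (d a n : ℕ) (h2 : 2 ≤ n) (hc : (n + (2*d-1))/(2*d) = a) :
    SG d n = mex2 (SG d (n-1)) (SG d a) := by
  obtain ⟨k, rfl⟩ : ∃ k, n = k + 2 := ⟨n - 2, by omega⟩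
  rw [SG, hc]; rfl

lemma ceil_eq (d a i : ℕ) (hd : 1 ≤ d) (ha : 1 ≤ a) (h1 : 2*d*(a-1) < i) (h2 : i ≤ 2*d*a) :
    (i + (2*d-1))/(2*d) = a := by
  obtain ⟨b, rfl⟩ : ∃ b, a = b + 1 := ⟨a - 1, by omega⟩
  have hr : 2*d*(b+1) = 2*d*b + 2*d := by ring
  have hr2 : (b+1)*(2*d) = 2*d*b + 2*d := by ring
  have hr3 : (b+1+1)*(2*d) = 2*d*b + 2*d + 2*d := by ring
  simp only [Nat.add_sub_cancel] at h1
  apply Nat.div_eq_of_lt_le <;> omega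
lemma mex2_eq (x s : ℕ) (hx : x ≤ 2) (hs : s ≤ 2) (hne : x ≠ s) : mex2 x s = 3 - s - x := by
  unfold mex2; split_ifs <;> omega

lemma mex2_zero (x s : ℕ) (hx : x ≠ 0) (hs : s ≠ 0) : mex2 x s = 0 := by
  unfold mex2; split_ifs <;> omega

lemma alt (d a s : ℕ) (hs : s = SG d a) (hs2 : s ≤ 2) :
    ∀ j m, SG d m ≤ 2 → SG d m ≠ s →
    (∀ i, m < i → i ≤ m + j → 2 ≤ i ∧ (i + (2*d-1))/(2*d) = a) →
    SG d (m+j) = if j % 2 = 0 then SG d m else 3 - s - SG d m := by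
  intro j
  induction j with
  | zero => intro m _ _ _; simp
  | succ j ih =>
    intro m hle hne H
    have hi := H (m+j+1) (by omega) (by omega)
    have hprev := ih m hle hne (fun i h1 h2 => H i h1 (by omega))
    have hstep : SG d (m+(j+1)) = mex2 (SG d (m+j)) (SG d a) := by
      have h := SG_step d a (m+j+1) hi.1 hi.2
      have e1 : m + (j+1) = m + j + 1 := by omega
      have e2 : m + j + 1 - 1 = m + j := by omega
      rw [e1, h, e2]
    rw [hstep, ← hs, hprev]
    by_cases hj : j % 2 = 0
    · have hj1 : ¬ (j+1) % 2 = 0 := by omega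
      simp only [hj, if_true, hj1, if_false]
      exact mex2_eq _ _ hle hs2 hne
    · have hj1 : (j+1) % 2 = 0 := by omega
      simp only [hj, if_false, hj1, if_true]
      rw [mex2_eq (3 - s - SG d m) s (by omega) hs2 (by omega)]
      omega

lemma key (d : ℕ) (hd : 1 ≤ d) :
    ∀ a, 1 ≤ a → SG d (2*d*a) ≠ 0 ∧ (SG d a ≠ 0 → SG d (2*d*a) = 3 - SG d a) := by
  intro a
  induction a using Nat.strong_induction_on with
  | _ a ih =>
  intro ha
  have hSG1 : SG d 1 = 0 := by rw [SG]
  rcases eq_or_lt_of_le ha with h1 | h2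
  · -- a = 1
    have hc2 : ((2:ℕ) + (2*d-1))/(2*d) = 1 := ceil_eq d 1 2 hd le_rfl (by simp) (by omega)
    have hSG2 : SG d 2 = 1 := by
      rw [SG_step d 1 2 le_rfl hc2]
      norm_num [hSG1]
      unfold mex2; norm_num
    have halt := alt d 1 0 hSG1.symm (by omega) (2*d-2) 2
      (by rw [hSG2]; omega) (by rw [hSG2]; omega)
      (fun i hi1 hi2 => ⟨by omega, ceil_eq d 1 i hd le_rfl (by simp; omega) (by omega)⟩)
    have he : 2 + (2*d-2) = 2*d := by omega
    have he2 : 2*d*a = 2*d := by rw [← h1]; ring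
    rw [he] at halt
    have hmod : (2*d-2) % 2 = 0 := by omega
    rw [hmod] at halt
    simp at halt
    constructor
    · rw [he2, halt, hSG2]; omega
    · intro hne; exfalso; rw [← h1] at hne; exact hne hSG1
  · -- a ≥ 2
    obtain ⟨b, rfl⟩ : ∃ b, a = b + 1 := ⟨a - 1, by omega⟩
    have hb : 1 ≤ b := by omega
    obtain ⟨hm0, -⟩ := ih b (by omega) hb
    set m := 2*d*b with hm
    have hma : 2*d*(b+1) = m + 2*d := by rw [hm]; ring
    have hx2 : SG d m ≤ 2 := SG_le d m
    have hs2 : SG d (b+1) ≤ 2 := SG_le d (b+1)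
    have hm2 : 2 ≤ m := by
      have : 2*1 ≤ 2*d*b := by
        calc 2*1 ≤ (2*d)*1 := by omega
        _ ≤ 2*d*b := Nat.mul_le_mul_left _ hb
      omega
    have Hc : ∀ i, m < i → i ≤ m + 2*d → 2 ≤ i ∧ (i + (2*d-1))/(2*d) = b+1 := by
      intro i hi1 hi2
      refine ⟨by omega, ceil_eq d (b+1) i hd (by omega) ?_ ?_⟩
      · simpa using hi1
      · omega
    by_cases hs0 : SG d (b+1) = 0
    · have halt := alt d (b+1) (SG d (b+1)) rfl hs2 (2*d) m hx2 (by rw [hs0]; exact hm0) Hc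
      have hmod : (2*d) % 2 = 0 := by omega
      rw [hmod] at halt; simp at halt
      rw [hma, halt]
      exact ⟨hm0, fun hne => absurd hs0 hne⟩
    · have hc1 : (m + 1 + (2*d-1))/(2*d) = b + 1 := (Hc (m+1) (by omega) (by omega)).2
      have h1 : SG d (m+1) = 0 := by
        rw [SG_step d (b+1) (m+1) (by omega) hc1]
        simp only [Nat.add_sub_cancel]
        exact mex2_zero _ _ hm0 hs0
      have halt := alt d (b+1) (SG d (b+1)) rfl hs2 (2*d-1) (m+1)
        (by rw [h1]; omega) (by rw [h1]; exact fun hh => hs0 hh.symm)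
        (fun i hi1 hi2 => Hc i (by omega) (by omega))
      have he : m + 1 + (2*d-1) = m + 2*d := by omega
      have hmod : (2*d-1) % 2 = 1 := by omega
      rw [he, hmod] at halt
      simp [h1] at halt
      rw [hma, halt]
      exact ⟨by omega, fun _ => rfl⟩

theorem stmt_14 (d : ℕ) (hd : 1 ≤ d) (a : ℕ) (ha : 1 ≤ a) (h : SGstar d a ≠ 0) :
    SGstar d a = SG d (2 * d * a) := by
  have hs2 : SG d a ≤ 2 := SG_le d a
  have hne : SG d a ≠ 0 := by
    intro h0
    apply h
    unfold SGstar
    rw [h0]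
  have hk := (key d hd a ha).2 hne
  unfold SGstar
  omega
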